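/- Let α₁, α₂ > 0 with α₁ + α₂ = α < 1. With θ*(α,y) as in the extended pivoting method and B(α₁,α₂) = {y : θ*(1−α₁,y) < θ̄ and θ*(α₂,y) > θ̲}, the conditional coverage probability P_θ{θ*(1−α₁,Y) ≤ θ ≤ θ*(α₂,Y) | Y ∈ B(α₁,α₂)} equals (1−α)/P_θ{Y ∈ B(α₁,α₂)}, which is at least 1−α. -/

import Mathlib

open MeasureTheory Set Filter

/-- Truncating Y to the "useful" set B(α₁,α₂) = {y : θ*(1−α₁,y) < θ̄ and θ*(α₂,y) > θ̲}
inflates the coverage probability to (1−α)/P_θ{Y ∈ B(α₁,α₂)}, which is at least 1−α. -/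
theorem pivot_cdf_conditional_coverage
    (tl tu : EReal) (htltu : tl < tu)
    (F : ℝ → ℝ → ℝ)
    (Θ : Set ℝ) (hΘ : Θ = {θ : ℝ | tl < (θ : EReal) ∧ (θ : EReal) < tu})
    (hFy : ∀ θ ∈ Θ, Continuous (fun y => F y θ))
    (hFθ : ∀ y : ℝ, ContinuousOn (fun θ => F y θ) Θ)
    (hanti : ∀ y : ℝ, StrictAntiOn (fun θ => F y θ) Θ)
    (μ : ℝ → Measure ℝ) (hprob : ∀ θ ∈ Θ, IsProbabilityMeasure (μ θ))
    (hcdf : ∀ θ ∈ Θ, ∀ y : ℝ, ((μ θ) (Iic y)).toReal = F y θ)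
    (Flo Fhi : ℝ → ℝ)
    (hFlo : ∀ y, Flo y = sSup ((fun θ => F y θ) '' Θ))
    (hFhi : ∀ y, Fhi y = sInf ((fun θ => F y θ) '' Θ))
    (θstar : ℝ → ℝ → EReal)
    (hstar1 : ∀ α y, Flo y ≤ α → θstar α y = tl)
    (hstar2 : ∀ α y, α ≤ Fhi y → θstar α y = tu)
    (hstar3 : ∀ α y, Fhi y < α → α < Flo y →
      ∃ t ∈ Θ, F y t = α ∧ θstar α y = (t : EReal))
    (α₁ α₂ : ℝ) (h1 : 0 < α₁) (h2 : 0 < α₂) (hsum : α₁ + α₂ < 1)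
    (θ : ℝ) (hθ : θ ∈ Θ)
    (B : Set ℝ) (hB : B = {y : ℝ | θstar (1 - α₁) y < tu ∧ tl < θstar α₂ y}) :
    μ θ ({y : ℝ | θstar (1 - α₁) y ≤ (θ : EReal) ∧ (θ : EReal) ≤ θstar α₂ y} ∩ B) / μ θ B
        = ENNReal.ofReal (1 - (α₁ + α₂)) / μ θ B ∧
      ENNReal.ofReal (1 - (α₁ + α₂)) ≤ ENNReal.ofReal (1 - (α₁ + α₂)) / μ θ B := by
  have hprobθ : IsProbabilityMeasure (μ θ) := hprob θ hθ
  set G : ℝ → ℝ := fun y => F y θ with hGdef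
  -- G agrees with the cdf of μ θ
  have hGcdf : ∀ y, ProbabilityTheory.cdf (μ θ) y = G y := by
    intro y
    rw [ProbabilityTheory.cdf_eq_real, measureReal_def, hcdf θ hθ y]
  have hGcont : Continuous G := hFy θ hθ
  have hGmono : Monotone G := by
    intro y₁ y₂ h
    rw [← hGcdf, ← hGcdf]
    exact ProbabilityTheory.monotone_cdf _ h
  have hGtop : Tendsto G atTop (nhds 1) :=
    (ProbabilityTheory.tendsto_cdf_atTop (μ := μ θ)).congr hGcdf
  have hGbot : Tendsto G atBot (nhds 0) :=
    (ProbabilityTheory.tendsto_cdf_atBot (μ := μ θ)).congr hGcdf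
  obtain ⟨hθl, hθu⟩ : tl < (θ : EReal) ∧ (θ : EReal) < tu := by rwa [hΘ] at hθ
  -- neighbors of θ in Θ
  obtain ⟨θ', hθ'l, hθ'θ⟩ := EReal.lt_iff_exists_real_btwn.mp hθl
  obtain ⟨θ'', hθθ'', hθ''u⟩ := EReal.lt_iff_exists_real_btwn.mp hθu
  have hθ'mem : θ' ∈ Θ := by
    rw [hΘ]; exact ⟨hθ'l, lt_trans hθ'θ hθu⟩
  have hθ''mem : θ'' ∈ Θ := by
    rw [hΘ]; exact ⟨lt_trans hθl hθθ'', hθ''u⟩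
  have hθ'θR : θ' < θ := EReal.coe_lt_coe_iff.mp hθ'θ
  have hθθ''R : θ < θ'' := EReal.coe_lt_coe_iff.mp hθθ''
  -- bounds on F values
  have hF01 : ∀ y, ∀ t ∈ Θ, 0 ≤ F y t ∧ F y t ≤ 1 := by
    intro y t ht
    have := hprob t ht
    constructor
    · rw [← hcdf t ht y]; exact ENNReal.toReal_nonneg
    · rw [← hcdf t ht y]
      have h1' : μ t (Iic y) ≤ 1 := prob_le_one
      calc (μ t (Iic y)).toReal ≤ (1 : ENNReal).toReal :=
            ENNReal.toReal_mono ENNReal.one_ne_top h1'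
        _ = 1 := by simp
  have hbddA : ∀ y, BddAbove ((fun t => F y t) '' Θ) := by
    intro y
    refine ⟨1, ?_⟩
    rintro v ⟨t, ht, rfl⟩
    exact (hF01 y t ht).2
  have hbddB : ∀ y, BddBelow ((fun t => F y t) '' Θ) := by
    intro y
    refine ⟨0, ?_⟩
    rintro v ⟨t, ht, rfl⟩
    exact (hF01 y t ht).1
  -- strict inequalities Fhi y < G y < Flo y
  have hGltFlo : ∀ y, G y < Flo y := by
    intro y
    have h1' : F y θ < F y θ' := hanti y hθ'mem hθ hθ'θR
    have h2' : F y θ' ≤ Flo y := by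
      rw [hFlo]; exact le_csSup (hbddA y) ⟨θ', hθ'mem, rfl⟩
    exact lt_of_lt_of_le h1' h2'
  have hFhiltG : ∀ y, Fhi y < G y := by
    intro y
    have h1' : F y θ'' < F y θ := hanti y hθ hθ''mem hθθ''R
    have h2' : Fhi y ≤ F y θ'' := by
      rw [hFhi]; exact csInf_le (hbddB y) ⟨θ'', hθ''mem, rfl⟩
    exact lt_of_le_of_lt h2' h1'
  -- Claim A : θ ≤ θstar α₂ y ↔ α₂ ≤ G y
  have claimA : ∀ y, ((θ : EReal) ≤ θstar α₂ y ↔ α₂ ≤ G y) := by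
    intro y
    rcases le_or_gt (Flo y) α₂ with hc | hc
    · rw [hstar1 α₂ y hc]
      constructor
      · intro h; exact absurd (lt_of_lt_of_le hθl h) (lt_irrefl _)
      · intro h
        exact absurd (lt_of_le_of_lt h (lt_of_lt_of_le (hGltFlo y) hc)) (lt_irrefl _)
    · rcases le_or_gt α₂ (Fhi y) with hc2 | hc2
      · rw [hstar2 α₂ y hc2]
        constructor
        · intro _; exact le_of_lt (lt_of_le_of_lt hc2 (hFhiltG y))
        · intro _; exact le_of_lt hθu
      · obtain ⟨t, htmem, htF, htstar⟩ := hstar3 α₂ y hc2 hc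
        rw [htstar, EReal.coe_le_coe_iff]
        constructor
        · intro h
          show α₂ ≤ F y θ
          rcases eq_or_lt_of_le h with heq | hlt
          · rw [heq, htF]
          · have h3 : F y t < F y θ := hanti y hθ htmem hlt
            rw [htF] at h3
            exact le_of_lt h3
        · intro h
          have h' : α₂ ≤ F y θ := h
          by_contra hcon
          push_neg at hcon
          have h3 : F y θ < F y t := hanti y htmem hθ hcon
          rw [htF] at h3
          linarith
  -- Claim B : θstar (1-α₁) y ≤ θ ↔ G y ≤ 1 - α₁
  have claimB : ∀ y, (θstar (1 - α₁) y ≤ (θ : EReal) ↔ G y ≤ 1 - α₁) := by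
    intro y
    rcases le_or_gt (Flo y) (1 - α₁) with hc | hc
    · rw [hstar1 _ y hc]
      constructor
      · intro _; exact le_of_lt (lt_of_lt_of_le (hGltFlo y) hc)
      · intro _; exact le_of_lt hθl
    · rcases le_or_gt (1 - α₁) (Fhi y) with hc2 | hc2
      · rw [hstar2 _ y hc2]
        constructor
        · intro h; exact absurd (lt_of_le_of_lt h hθu) (lt_irrefl _)
        · intro h
          have := hFhiltG y
          linarith
      · obtain ⟨t, htmem, htF, htstar⟩ := hstar3 _ y hc2 hc
        rw [htstar, EReal.coe_le_coe_iff]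
        constructor
        · intro h
          show F y θ ≤ 1 - α₁
          rcases eq_or_lt_of_le h with heq | hlt
          · rw [← heq, htF]
          · have h3 : F y θ < F y t := hanti y htmem hθ hlt
            rw [htF] at h3
            exact le_of_lt h3
        · intro h
          have h' : F y θ ≤ 1 - α₁ := h
          by_contra hcon
          push_neg at hcon
          have h3 : F y t < F y θ := hanti y hθ htmem hcon
          rw [htF] at h3
          linarith
  have hα₂lt : α₂ < 1 - α₁ := by linarith
  have h1lt : α₁ < 1 := by linarith
  -- the level sets
  set A : Set ℝ := {y | α₂ ≤ G y} with hA
  set Bs : Set ℝ := {y | G y ≤ 1 - α₁} with hBs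
  have hAclosed : IsClosed A := isClosed_le continuous_const hGcont
  have hBsclosed : IsClosed Bs := isClosed_le hGcont continuous_const
  have hAne : A.Nonempty := by
    have h := hGtop.eventually (eventually_ge_nhds (by linarith : α₂ < 1))
    exact h.exists
  have hAbdd : BddBelow A := by
    obtain ⟨y₀, hy₀⟩ := (hGbot.eventually (eventually_lt_nhds h2)).exists
    refine ⟨y₀, fun z hz => ?_⟩
    by_contra hcon
    push_neg at hcon
    exact absurd (lt_of_le_of_lt hz (lt_of_le_of_lt (hGmono (le_of_lt hcon)) hy₀)) (lt_irrefl _)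
  have hBsne : Bs.Nonempty := by
    have h := hGbot.eventually (eventually_le_nhds (by linarith : (0:ℝ) < 1 - α₁))
    exact h.exists
  have hBsbdd : BddAbove Bs := by
    obtain ⟨y₀, hy₀⟩ := (hGtop.eventually (eventually_gt_nhds (by linarith : 1 - α₁ < 1))).exists
    refine ⟨y₀, fun z hz => ?_⟩
    by_contra hcon
    push_neg at hcon
    have hmz : G y₀ ≤ G z := hGmono (le_of_lt hcon)
    have hz' : G z ≤ 1 - α₁ := hz
    linarith
  set a : ℝ := sInf A with ha
  set b : ℝ := sSup Bs with hb
  have haA : a ∈ A := hAclosed.csInf_mem hAne hAbdd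
  have hbBs : b ∈ Bs := hBsclosed.csSup_mem hBsne hBsbdd
  have hGa_ge : α₂ ≤ G a := haA
  have hGb_le : G b ≤ 1 - α₁ := hbBs
  have hltA : ∀ y, y < a → G y < α₂ := by
    intro y hy
    by_contra hcon
    push_neg at hcon
    exact absurd (lt_of_le_of_lt (csInf_le hAbdd hcon) hy) (lt_irrefl _)
  have hgtB : ∀ y, b < y → 1 - α₁ < G y := by
    intro y hy
    by_contra hcon
    push_neg at hcon
    exact absurd (lt_of_lt_of_le hy (le_csSup hBsbdd hcon)) (lt_irrefl _)
  have hGa_le : G a ≤ α₂ := by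
    have htend : Tendsto G (nhdsWithin a (Iio a)) (nhds (G a)) :=
      (hGcont.continuousAt.continuousWithinAt : ContinuousWithinAt G (Iio a) a)
    refine le_of_tendsto htend ?_
    filter_upwards [self_mem_nhdsWithin] with y hy
    exact le_of_lt (hltA y hy)
  have hGb_ge : 1 - α₁ ≤ G b := by
    have htend : Tendsto G (nhdsWithin b (Ioi b)) (nhds (G b)) :=
      (hGcont.continuousAt.continuousWithinAt : ContinuousWithinAt G (Ioi b) b)
    refine ge_of_tendsto htend ?_
    filter_upwards [self_mem_nhdsWithin] with y hy
    exact le_of_lt (hgtB y hy)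
  have hGa : G a = α₂ := le_antisymm hGa_le hGa_ge
  have hGb : G b = 1 - α₁ := le_antisymm hGb_le hGb_ge
  have hab : a ≤ b := by
    by_contra hcon
    push_neg at hcon
    have := hGmono (le_of_lt hcon)
    rw [hGa, hGb] at this
    linarith
  have hIioIic : Iio a ⊆ Iic b := fun y hy => le_trans (le_of_lt hy) hab
  -- identify the level sets with intervals
  have hBsIic : Bs = Iic b := by
    ext y
    constructor
    · intro hy; exact le_csSup hBsbdd hy
    · intro hy
      show G y ≤ 1 - α₁
      calc G y ≤ G b := hGmono hy
        _ = 1 - α₁ := hGb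
  have hIioA : {y : ℝ | G y < α₂} = Iio a := by
    ext y
    constructor
    · intro hy
      by_contra hcon
      rw [mem_Iio] at hcon
      have : G a ≤ G y := hGmono (not_lt.mp hcon)
      rw [hGa] at this
      exact absurd (lt_of_le_of_lt this hy) (lt_irrefl _)
    · intro hy; exact hltA y hy
  -- measure of Iio a
  have hμIic : ∀ y : ℝ, ((μ θ) (Iic y)).toReal = G y := hcdf θ hθ
  have hμIio_le : ((μ θ) (Iio a)).toReal ≤ α₂ := by
    have h := ENNReal.toReal_mono (measure_ne_top (μ θ) (Iic a))
      (measure_mono (Iio_subset_Iic_self : Iio a ⊆ Iic a))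
    rw [hμIic a, hGa] at h
    exact h
  have hμIio_ge : α₂ ≤ ((μ θ) (Iio a)).toReal := by
    have htend : Tendsto G (nhdsWithin a (Iio a)) (nhds (G a)) :=
      (hGcont.continuousAt.continuousWithinAt : ContinuousWithinAt G (Iio a) a)
    rw [← hGa]
    refine le_of_tendsto htend ?_
    filter_upwards [self_mem_nhdsWithin] with y hy
    rw [← hμIic y]
    have hss : Iic y ⊆ Iio a := fun z hz => mem_Iio.mpr (lt_of_le_of_lt (mem_Iic.mp hz) (mem_Iio.mp hy))
    exact ENNReal.toReal_mono (measure_ne_top _ _) (measure_mono hss)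
  have hμIio : ((μ θ) (Iio a)).toReal = α₂ := le_antisymm hμIio_le hμIio_ge
  -- coverage set
  set C : Set ℝ := {y : ℝ | θstar (1 - α₁) y ≤ (θ : EReal) ∧ (θ : EReal) ≤ θstar α₂ y} with hC
  have hsub : C ⊆ B := by
    intro y hy
    obtain ⟨hy1, hy2⟩ := hy
    rw [hB]
    exact ⟨lt_of_le_of_lt hy1 hθu, lt_of_lt_of_le hθl hy2⟩
  have hCeq : C = Iic b \ Iio a := by
    ext y
    constructor
    · intro hy
      obtain ⟨hy1, hy2⟩ := hy
      have hG1 : G y ≤ 1 - α₁ := (claimB y).mp hy1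
      have hG2 : α₂ ≤ G y := (claimA y).mp hy2
      constructor
      · rw [← hBsIic]; exact hG1
      · intro hcon
        rw [← hIioA] at hcon
        exact absurd (lt_of_le_of_lt hG2 hcon) (lt_irrefl _)
    · intro hy
      obtain ⟨hy1, hy2⟩ := hy
      rw [← hBsIic] at hy1
      constructor
      · exact (claimB y).mpr hy1
      · refine (claimA y).mpr ?_
        by_contra hcon
        push_neg at hcon
        have hmem : y ∈ Iio a := by rw [← hIioA]; exact hcon
        exact hy2 hmem
  have hμC : (μ θ) C = ENNReal.ofReal (1 - (α₁ + α₂)) := by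
    rw [hCeq]
    have hdiff : (μ θ) (Iic b \ Iio a) = (μ θ) (Iic b) - (μ θ) (Iio a) :=
      measure_diff hIioIic measurableSet_Iio.nullMeasurableSet (measure_ne_top _ _)
    rw [hdiff]
    have hle : (μ θ) (Iio a) ≤ (μ θ) (Iic b) := measure_mono hIioIic
    have htoReal : ((μ θ) (Iic b) - (μ θ) (Iio a)).toReal
        = ((μ θ) (Iic b)).toReal - ((μ θ) (Iio a)).toReal :=
      ENNReal.toReal_sub_of_le hle (measure_ne_top _ _)
    have hfin : (μ θ) (Iic b) - (μ θ) (Iio a) ≠ ⊤ := by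
      exact ne_top_of_le_ne_top (measure_ne_top _ _) (tsub_le_self : _ ≤ (μ θ) (Iic b))
    rw [← ENNReal.ofReal_toReal hfin, htoReal, hμIic b, hGb, hμIio]
    congr 1
    ring
  have hinter : C ∩ B = C := inter_eq_left.mpr hsub
  constructor
  · rw [show ({y : ℝ | θstar (1 - α₁) y ≤ (θ : EReal) ∧ (θ : EReal) ≤ θstar α₂ y} ∩ B) = C ∩ B from rfl,
      hinter, hμC]
  · have hBle : μ θ B ≤ 1 := prob_le_one
    have hinv : (1 : ENNReal) ≤ (μ θ B)⁻¹ := ENNReal.one_le_inv.mpr hBle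
    calc ENNReal.ofReal (1 - (α₁ + α₂)) = ENNReal.ofReal (1 - (α₁ + α₂)) * 1 := (mul_one _).symm
      _ ≤ ENNReal.ofReal (1 - (α₁ + α₂)) * (μ θ B)⁻¹ := mul_le_mul_right hinv _
      _ = ENNReal.ofReal (1 - (α₁ + α₂)) / μ θ B := (div_eq_mul_inv _ _).symm
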